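/- arXiv:2509.22035 — 3 statements merged into one kernel-verified Lean document; each statement's English description precedes it below -/
import Mathlib

section
/- Let 1 < p < ∞ and d ≥ 1, and let P be the unique minimizer of ‖Q‖_p^p among polynomials Q of degree at most d with Q(1) = 1. Then P has exact degree d. -/
noncomputable def pNormPow (p : ℝ) (P : Polynomial ℂ) : ℝ :=
  (1 / (2 * Real.pi)) *
    ∫ θ in (-Real.pi)..Real.pi, ‖P.eval (Complex.exp (θ * Complex.I))‖ ^ p

open Polynomial Complex Real in
theorem stmt4 (p : ℝ) (hp1 : 1 < p) (d : ℕ) (hd : 1 ≤ d) (P : Polynomial ℂ)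
    (hdeg : P.natDegree ≤ d) (hval : P.eval 1 = 1)
    (hmin : ∀ Q : Polynomial ℂ, Q.natDegree ≤ d → Q.eval 1 = 1 →
      pNormPow p P ≤ pNormPow p Q) :
    P.natDegree = d := by
  have hp0 : (0:ℝ) < p := by linarith
  by_contra hne
  have hn : P.natDegree < d := lt_of_le_of_ne hdeg hne
  have hP0 : P ≠ 0 := fun h => by simp [h] at hval
  set Q : Polynomial ℂ := Polynomial.C (1/2 : ℂ) * (1 + Polynomial.X) * P with hQdef
  have hQdeg : Q.natDegree ≤ d := by
    refine le_trans (Polynomial.natDegree_mul_le) ?_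
    have h1 : (Polynomial.C (1/2 : ℂ) * (1 + Polynomial.X)).natDegree ≤ 1 := by
      refine le_trans (Polynomial.natDegree_mul_le) ?_
      have h2 : (1 + Polynomial.X : Polynomial ℂ).natDegree ≤ 1 := by
        simpa using Polynomial.natDegree_add_le (1 : Polynomial ℂ) Polynomial.X
      simpa using h2
    omega
  have hQval : Q.eval 1 = 1 := by
    simp [hQdef, hval]
    ring
  -- the exp map is injective on Ioo 0 π
  have hinj : Set.InjOn (fun θ : ℝ => Complex.exp (θ * Complex.I)) (Set.Ioo 0 Real.pi) := by
    intro x hx y hy hxy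
    have hx' : -Real.pi < ((x : ℂ) * Complex.I).im ∧ ((x : ℂ) * Complex.I).im ≤ Real.pi := by
      simp; constructor <;> nlinarith [hx.1, hx.2, Real.pi_pos]
    have hy' : -Real.pi < ((y : ℂ) * Complex.I).im ∧ ((y : ℂ) * Complex.I).im ≤ Real.pi := by
      simp; constructor <;> nlinarith [hy.1, hy.2, Real.pi_pos]
    have := Complex.exp_inj_of_neg_pi_lt_of_le_pi hx'.1 hx'.2 hy'.1 hy'.2 hxy
    exact_mod_cast mul_right_cancel₀ Complex.I_ne_zero this
  -- find θ₀ ∈ (0, π) with P(e^{iθ₀}) ≠ 0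
  obtain ⟨θ₀, hθ₀, hPθ₀⟩ :
      ∃ θ ∈ Set.Ioo (0:ℝ) Real.pi, P.eval (Complex.exp (θ * Complex.I)) ≠ 0 := by
    by_contra h
    push_neg at h
    have himg : (fun θ : ℝ => Complex.exp (θ * Complex.I)) '' Set.Ioo 0 Real.pi ⊆
        {x : ℂ | P.IsRoot x} := by
      rintro _ ⟨θ, hθ, rfl⟩
      exact h θ hθ
    have hfin : ((fun θ : ℝ => Complex.exp (θ * Complex.I)) '' Set.Ioo 0 Real.pi).Finite :=
      (Polynomial.finite_setOf_isRoot hP0).subset himg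
    exact (Set.Ioo_infinite Real.pi_pos) (Set.Finite.of_finite_image hfin hinj)
  -- basic facts about the circle point
  have habs1 : ∀ θ : ℝ, ‖(Complex.exp (θ * Complex.I))‖ = 1 := fun θ =>
    Complex.norm_exp_ofReal_mul_I θ
  -- pointwise comparison of integrands
  have evalQ : ∀ θ : ℝ, ‖(Q.eval (Complex.exp (θ * Complex.I)))‖
      = ‖((1/2 : ℂ) * (1 + Complex.exp (θ * Complex.I)))‖
        * ‖(P.eval (Complex.exp (θ * Complex.I)))‖ := by
    intro θ
    simp [hQdef, norm_mul]
  have hfactor_le : ∀ θ : ℝ,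
      ‖((1/2 : ℂ) * (1 + Complex.exp (θ * Complex.I)))‖ ≤ 1 := by
    intro θ
    rw [norm_mul]
    have : ‖(1 + Complex.exp (θ * Complex.I))‖ ≤ 2 := by
      calc ‖(1 + Complex.exp (θ * Complex.I))‖
          ≤ ‖(1:ℂ)‖ + ‖(Complex.exp (θ * Complex.I))‖ := by
            exact norm_add_le _ _
        _ = 2 := by rw [habs1]; norm_num
    calc ‖(1/2 : ℂ)‖ * ‖(1 + Complex.exp (θ * Complex.I))‖
        ≤ ‖(1/2 : ℂ)‖ * 2 := by
          exact mul_le_mul_of_nonneg_left this (norm_nonneg _)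
      _ = 1 := by rw [norm_div]; simp
  have hfactor_lt : ‖((1/2 : ℂ) * (1 + Complex.exp (θ₀ * Complex.I)))‖ < 1 := by
    rw [norm_mul]
    have hre : (Complex.exp (θ₀ * Complex.I)).re < 1 := by
      rw [Complex.exp_ofReal_mul_I_re]
      have := Real.cos_lt_cos_of_nonneg_of_le_pi le_rfl hθ₀.2.le hθ₀.1
      simpa using this
    have hsq : (‖(1 + Complex.exp (θ₀ * Complex.I))‖)^2 < 2^2 := by
      rw [Complex.sq_norm, Complex.normSq_add]
      have h1 : Complex.normSq 1 = 1 := by simp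
      have h2 : Complex.normSq (Complex.exp (θ₀ * Complex.I)) = 1 := by
        rw [← Complex.sq_norm, habs1]; norm_num
      have h3 : (1 * (starRingEnd ℂ) (Complex.exp (θ₀ * Complex.I))).re
          = (Complex.exp (θ₀ * Complex.I)).re := by simp
      rw [h1, h2, h3]
      nlinarith
    have habslt : ‖(1 + Complex.exp (θ₀ * Complex.I))‖ < 2 :=
      lt_of_pow_lt_pow_left₀ 2 (by norm_num) hsq
    calc ‖(1/2 : ℂ)‖ * ‖(1 + Complex.exp (θ₀ * Complex.I))‖
        < ‖(1/2 : ℂ)‖ * 2 := by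
          refine mul_lt_mul_of_pos_left habslt ?_
          exact norm_pos_iff.2 (by norm_num)
      _ = 1 := by rw [norm_div]; simp
  -- integrand functions
  set f : ℝ → ℝ := fun θ => (‖(Q.eval (Complex.exp (θ * Complex.I)))‖) ^ p with hf
  set g : ℝ → ℝ := fun θ => (‖(P.eval (Complex.exp (θ * Complex.I)))‖) ^ p with hg
  have hcont : ∀ R : Polynomial ℂ, Continuous fun θ : ℝ =>
      (‖(R.eval (Complex.exp (θ * Complex.I)))‖) ^ p := by
    intro R
    refine Continuous.rpow_const ?_ (fun x => Or.inr hp0.le)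
    exact continuous_norm.comp ((R.continuous).comp
      (Complex.continuous_exp.comp (Complex.continuous_ofReal.mul continuous_const)))
  have hle : ∀ θ ∈ Set.Ioc (-Real.pi) Real.pi, f θ ≤ g θ := by
    intro θ _
    rw [hf, hg]
    simp only
    rw [evalQ θ, Real.mul_rpow (norm_nonneg _) (norm_nonneg _)]
    refine mul_le_of_le_one_left (Real.rpow_nonneg (norm_nonneg _) p) ?_
    exact Real.rpow_le_one (norm_nonneg _) (hfactor_le θ) hp0.le
  have hlt : ∃ c ∈ Set.Icc (-Real.pi) Real.pi, f c < g c := by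
    refine ⟨θ₀, ⟨by linarith [hθ₀.1, Real.pi_pos], hθ₀.2.le⟩, ?_⟩
    rw [hf, hg]
    simp only
    rw [evalQ θ₀, Real.mul_rpow (norm_nonneg _) (norm_nonneg _)]
    have hb : 0 < (‖(P.eval (Complex.exp (θ₀ * Complex.I)))‖) ^ p :=
      Real.rpow_pos_of_pos (norm_pos_iff.2 hPθ₀) p
    have ha : (‖((1/2 : ℂ) * (1 + Complex.exp (θ₀ * Complex.I)))‖) ^ p < 1 :=
      Real.rpow_lt_one (norm_nonneg _) hfactor_lt hp0
    calc (‖((1/2 : ℂ) * (1 + Complex.exp (θ₀ * Complex.I)))‖) ^ p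
          * (‖(P.eval (Complex.exp (θ₀ * Complex.I)))‖) ^ p
        < 1 * (‖(P.eval (Complex.exp (θ₀ * Complex.I)))‖) ^ p :=
          mul_lt_mul_of_pos_right ha hb
      _ = _ := one_mul _
  have hint : (∫ θ in (-Real.pi)..Real.pi, f θ) < ∫ θ in (-Real.pi)..Real.pi, g θ := by
    refine intervalIntegral.integral_lt_integral_of_continuousOn_of_le_of_exists_lt
      (by linarith [Real.pi_pos]) ((hcont Q).continuousOn) ((hcont P).continuousOn) hle hlt
  have key : pNormPow p Q < pNormPow p P := by
    unfold pNormPow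
    have hc : (0:ℝ) < 1 / (2 * Real.pi) := by positivity
    exact mul_lt_mul_of_pos_left hint hc
  exact absurd (hmin Q hQdeg hQval) (not_le.2 key)
end

section
/- Let 1 < p < ∞ and d ≥ 1, and let P be the unique minimizer of ‖Q‖_p^p among polynomials of degree at most d with Q(1) = 1. Then all zeroes of P lie on the unit circle, and P(e^{iθ}) = conjugate of P(e^{-iθ}) for all θ (equivalently, P has real coefficients). -/
namespace Stmt5Aux

open Polynomial MeasureTheory Set Real


lemma cont_integrand (p : ℝ) (hp : 0 ≤ p) (P : Polynomial ℂ) :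
    Continuous fun θ : ℝ => (norm (P.eval (Complex.exp (θ * Complex.I)))) ^ p := by
  have h1 : Continuous fun θ : ℝ => Complex.exp (θ * Complex.I) :=
    Complex.continuous_exp.comp (Complex.continuous_ofReal.mul continuous_const)
  exact (continuous_norm.comp (P.continuous.comp h1)).rpow_const (fun x => Or.inr hp)

lemma rpow_mid_le {p : ℝ} (hp : 1 ≤ p) {a b : ℝ} (ha : 0 ≤ a) (hb : 0 ≤ b) :
    ((a + b) / 2) ^ p ≤ (a ^ p + b ^ p) / 2 := by
  have h := (convexOn_rpow hp).2 (mem_Ici.2 ha) (mem_Ici.2 hb)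
    (by norm_num : (0:ℝ) ≤ 1/2) (by norm_num : (0:ℝ) ≤ 1/2) (by norm_num)
  simp only [smul_eq_mul] at h
  have e1 : (1/2:ℝ) * a + (1/2:ℝ) * b = (a + b) / 2 := by ring
  have e2 : (1/2:ℝ) * a ^ p + (1/2:ℝ) * b ^ p = (a ^ p + b ^ p) / 2 := by ring
  rw [e1, e2] at h
  exact h

lemma rpow_mid_lt {p : ℝ} (hp : 1 < p) {a b : ℝ} (ha : 0 ≤ a) (hb : 0 ≤ b) (hne : a ≠ b) :
    ((a + b) / 2) ^ p < (a ^ p + b ^ p) / 2 := by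
  have h := (strictConvexOn_rpow hp).2 (mem_Ici.2 ha) (mem_Ici.2 hb) hne
    (by norm_num : (0:ℝ) < 1/2) (by norm_num : (0:ℝ) < 1/2) (by norm_num)
  simp only [smul_eq_mul] at h
  have e1 : (1/2:ℝ) * a + (1/2:ℝ) * b = (a + b) / 2 := by ring
  have e2 : (1/2:ℝ) * a ^ p + (1/2:ℝ) * b ^ p = (a ^ p + b ^ p) / 2 := by ring
  rw [e1, e2] at h
  exact h

lemma eq_of_midpoint_rpow {p : ℝ} (hp : 1 < p) (u v : ℂ)
    (h : (norm ((u + v) / 2)) ^ p = ((norm u) ^ p + (norm v) ^ p) / 2) :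
    u = v := by
  have hp0 : (0:ℝ) < p := by linarith
  set a := norm u with ha_def
  set b := norm v with hb_def
  have ha : 0 ≤ a := norm_nonneg u
  have hb : 0 ≤ b := norm_nonneg v
  have habs : norm ((u + v) / 2) = norm (u + v) / 2 := by
    rw [norm_div]; norm_num
  have hle : norm ((u + v) / 2) ≤ (a + b) / 2 := by
    rw [habs]
    have := norm_add_le u v
    linarith
  have h1 : (norm ((u + v) / 2)) ^ p ≤ ((a + b) / 2) ^ p :=
    Real.rpow_le_rpow (norm_nonneg _) hle (le_of_lt hp0)
  have hab : a = b := by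
    by_contra hne
    have := rpow_mid_lt hp ha hb hne
    linarith
  have h3 : (norm ((u + v) / 2)) ^ p = a ^ p := by
    rw [h, ← hab]; ring
  have hmid : norm ((u + v) / 2) = a := by
    rcases lt_or_eq_of_le hle with hlt | heq
    · exfalso
      have : (norm ((u + v) / 2)) ^ p < ((a + b) / 2) ^ p :=
        Real.rpow_lt_rpow (norm_nonneg _) hlt hp0
      rw [h3, ← hab] at this
      have e : (a + a) / 2 = a := by ring
      rw [e] at this
      exact lt_irrefl _ this
    · rw [heq, ← hab]; ring
  rcases eq_or_ne a 0 with h0 | h0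
  · have hu : u = 0 := by
      have := norm_eq_zero.mp (ha_def ▸ h0)
      exact this
    have hv : v = 0 := by
      apply norm_eq_zero.mp
      rw [← hb_def, ← hab, h0]
    rw [hu, hv]
  · have hadd : ‖u + v‖ = ‖u‖ + ‖v‖ := by
      have : norm (u + v) = a + b := by
        rw [habs] at hmid
        rw [← hab]; linarith
      simpa [← ha_def, ← hb_def] using this
    have hnorm : ‖u‖ = ‖v‖ := by simpa using hab
    exact eq_of_norm_eq_of_norm_add_eq hnorm hadd

lemma exp_injOn : InjOn (fun θ : ℝ => Complex.exp (θ * Complex.I)) (Ioc (-Real.pi) Real.pi) := by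
  intro x hx y hy h
  simp only at h
  rw [Complex.exp_eq_exp_iff_exists_int] at h
  obtain ⟨n, hn⟩ := h
  have hI : (Complex.I : ℂ) ≠ 0 := Complex.I_ne_zero
  have h2 : ((x : ℂ)) = ((y : ℂ)) + n * (2 * Real.pi) := by
    have : (x : ℂ) * Complex.I = ((y : ℂ) + n * (2 * Real.pi)) * Complex.I := by
      rw [hn]; ring
    exact mul_right_cancel₀ hI this
  have h3 : x = y + (n : ℝ) * (2 * Real.pi) := by
    exact_mod_cast h2
  have hπ := Real.pi_pos
  have hn0 : n = 0 := by
    have hb1 : (-1 : ℝ) < (n : ℝ) := by nlinarith [hx.1, hx.2, hy.1, hy.2]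
    have hb2 : ((n : ℝ)) < 1 := by nlinarith [hx.1, hx.2, hy.1, hy.2]
    have : (-1 : ℤ) < n ∧ n < 1 := by exact_mod_cast And.intro hb1 hb2
    omega
  rw [hn0] at h3
  simpa using h3

lemma eval_map_conj (P : Polynomial ℂ) (z : ℂ) :
    (P.map (starRingEnd ℂ)).eval (starRingEnd ℂ z) = starRingEnd ℂ (P.eval z) := by
  rw [Polynomial.eval_map, Polynomial.eval₂_at_apply]


variable {p : ℝ}

lemma uniq (hp1 : 1 < p) (d : ℕ) (P : Polynomial ℂ)
    (hdeg : P.natDegree ≤ d) (hval : P.eval 1 = 1)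
    (hmin : ∀ Q : Polynomial ℂ, Q.natDegree ≤ d → Q.eval 1 = 1 →
      pNormPow p P ≤ pNormPow p Q)
    (Q : Polynomial ℂ) (hQdeg : Q.natDegree ≤ d) (hQval : Q.eval 1 = 1)
    (hQnorm : pNormPow p Q = pNormPow p P) : Q = P := by
  have hp0 : (0:ℝ) ≤ p := by linarith
  have hπ := Real.pi_pos
  set R : Polynomial ℂ := Polynomial.C (1/2 : ℂ) * (P + Q) with hR
  have hRdeg : R.natDegree ≤ d := by
    refine le_trans (natDegree_C_mul_le _ _) (le_trans (natDegree_add_le _ _) ?_)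
    exact max_le hdeg hQdeg
  have hRval : R.eval 1 = 1 := by
    simp [hR, hval, hQval]; norm_num
  have hReval : ∀ z : ℂ, R.eval z = (P.eval z + Q.eval z) / 2 := by
    intro z; simp [hR]; ring
  set f : ℝ → ℝ := fun θ => (norm (P.eval (Complex.exp (θ * Complex.I)))) ^ p with hf
  set g : ℝ → ℝ := fun θ => (norm (Q.eval (Complex.exp (θ * Complex.I)))) ^ p with hg
  set h : ℝ → ℝ := fun θ => (norm (R.eval (Complex.exp (θ * Complex.I)))) ^ p with hh
  have hcf : Continuous f := cont_integrand p hp0 P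
  have hcg : Continuous g := cont_integrand p hp0 Q
  have hch : Continuous h := cont_integrand p hp0 R
  set D : ℝ → ℝ := fun θ => (f θ + g θ) / 2 - h θ with hD
  have hDnn : ∀ θ, 0 ≤ D θ := by
    intro θ
    have := rpow_mid_le (le_of_lt hp1)
      (norm_nonneg (P.eval (Complex.exp (θ * Complex.I))))
      (norm_nonneg (Q.eval (Complex.exp (θ * Complex.I))))
    have he : h θ = (norm ((P.eval (Complex.exp (θ * Complex.I)) +
        Q.eval (Complex.exp (θ * Complex.I))) / 2)) ^ p := by
      simp only [hh, hReval]
    simp only [hD]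
    rw [he]
    have h2 : norm ((P.eval (Complex.exp (θ * Complex.I)) +
        Q.eval (Complex.exp (θ * Complex.I))) / 2) =
        (norm (P.eval (Complex.exp (θ * Complex.I))) +
         norm (Q.eval (Complex.exp (θ * Complex.I)))) / 2 →
        True := fun _ => trivial
    clear h2
    have hle2 : norm ((P.eval (Complex.exp (θ * Complex.I)) +
        Q.eval (Complex.exp (θ * Complex.I))) / 2) ≤
        (norm (P.eval (Complex.exp (θ * Complex.I))) +
         norm (Q.eval (Complex.exp (θ * Complex.I)))) / 2 := by
      rw [norm_div]
      have := norm_add_le (P.eval (Complex.exp (θ * Complex.I)))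
        (Q.eval (Complex.exp (θ * Complex.I)))
      simp only [Complex.norm_ofNat]
      linarith
    have hr := Real.rpow_le_rpow (norm_nonneg _) hle2 hp0
    simp only [hf, hg]
    linarith [le_trans hr this]
  have hIf : IntervalIntegrable f volume (-Real.pi) Real.pi := hcf.intervalIntegrable _ _
  have hIg : IntervalIntegrable g volume (-Real.pi) Real.pi := hcg.intervalIntegrable _ _
  have hIh : IntervalIntegrable h volume (-Real.pi) Real.pi := hch.intervalIntegrable _ _
  have hID : IntervalIntegrable D volume (-Real.pi) Real.pi :=
    (((hcf.add hcg).div_const 2).sub hch).intervalIntegrable _ _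
  set If := ∫ θ in (-Real.pi)..Real.pi, f θ with hIf'
  set Ig := ∫ θ in (-Real.pi)..Real.pi, g θ with hIg'
  set Ih := ∫ θ in (-Real.pi)..Real.pi, h θ with hIh'
  have hintD : ∫ θ in (-Real.pi)..Real.pi, D θ = (If + Ig) / 2 - Ih := by
    simp only [hD]
    rw [intervalIntegral.integral_sub ((hIf.add hIg).div_const 2) hIh]
    congr 1
    rw [intervalIntegral.integral_div]
    congr 1
    exact intervalIntegral.integral_add hIf hIg
  have hc : (0:ℝ) < 1 / (2 * Real.pi) := by positivity
  have hfh : If ≤ Ih := by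
    have := hmin R hRdeg hRval
    simp only [pNormPow] at this
    exact le_of_mul_le_mul_left this hc
  have hfg : Ig = If := by
    have : (1 / (2 * Real.pi)) * Ig = (1 / (2 * Real.pi)) * If := hQnorm
    exact mul_left_cancel₀ (ne_of_gt hc) this
  have hD0 : ∫ θ in (-Real.pi)..Real.pi, D θ = 0 := by
    have h1 : (0:ℝ) ≤ ∫ θ in (-Real.pi)..Real.pi, D θ :=
      intervalIntegral.integral_nonneg (by linarith) (fun θ _ => hDnn θ)
    have h2 : ∫ θ in (-Real.pi)..Real.pi, D θ ≤ 0 := by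
      rw [hintD, hfg]; linarith
    linarith
  have hae : D =ᵐ[volume.restrict (Ioc (-Real.pi) Real.pi)] 0 := by
    rw [← intervalIntegral.integral_eq_zero_iff_of_le_of_nonneg_ae (by linarith)
      (Filter.Eventually.of_forall (fun θ => hDnn θ)) hID]
    exact hD0
  -- S : the zero set of D inside Ioc, is infinite
  set S : Set ℝ := {θ ∈ Ioc (-Real.pi) Real.pi | D θ = 0} with hS
  have hSinf : S.Infinite := by
    by_contra hfin
    rw [Set.not_infinite] at hfin
    have hT : volume ({θ | D θ ≠ 0} ∩ Ioc (-Real.pi) Real.pi) = 0 := by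
      have := MeasureTheory.ae_iff.mp hae
      rw [Measure.restrict_apply] at this
      · simpa using this
      · exact (((hcf.add hcg).div_const 2).sub hch).measurable (measurableSet_singleton 0).compl
    have hsub : Ioc (-Real.pi) Real.pi ⊆ S ∪ ({θ | D θ ≠ 0} ∩ Ioc (-Real.pi) Real.pi) := by
      intro θ hθ
      by_cases hc : D θ = 0
      · exact Or.inl ⟨hθ, hc⟩
      · exact Or.inr ⟨hc, hθ⟩
    have hle : volume (Ioc (-Real.pi) Real.pi) ≤ volume S +
        volume ({θ | D θ ≠ 0} ∩ Ioc (-Real.pi) Real.pi) :=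
      le_trans (measure_mono hsub) (measure_union_le _ _)
    rw [hT, hfin.measure_zero, Real.volume_Ioc] at hle
    simp at hle
    linarith
  -- every point of S gives a root of P - Q on the circle
  have hroot : (fun θ : ℝ => Complex.exp (θ * Complex.I)) '' S ⊆ {x | (P - Q).IsRoot x} := by
    rintro x ⟨θ, hθ, rfl⟩
    have hDθ : D θ = 0 := hθ.2
    have heq : P.eval (Complex.exp (θ * Complex.I)) = Q.eval (Complex.exp (θ * Complex.I)) := by
      apply eq_of_midpoint_rpow hp1
      have he : h θ = (norm ((P.eval (Complex.exp (θ * Complex.I)) +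
          Q.eval (Complex.exp (θ * Complex.I))) / 2)) ^ p := by
        simp only [hh, hReval]
      simp only [hD] at hDθ
      rw [he] at hDθ
      simp only [hf, hg] at hDθ
      linarith
    simp [Polynomial.IsRoot, heq]
  have hinf2 : Set.Infinite {x | (P - Q).IsRoot x} :=
    Set.Infinite.mono hroot (hSinf.image (exp_injOn.mono (fun θ hθ => hθ.1)))
  have : P - Q = 0 := Polynomial.eq_zero_of_infinite_isRoot _ hinf2
  have := sub_eq_zero.mp this
  exact this.symm


end Stmt5Aux

open Polynomial MeasureTheory Set Real Stmt5Aux in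
theorem stmt5 (p : ℝ) (hp1 : 1 < p) (d : ℕ) (hd : 1 ≤ d) (P : Polynomial ℂ)
    (hdeg : P.natDegree ≤ d) (hval : P.eval 1 = 1)
    (hmin : ∀ Q : Polynomial ℂ, Q.natDegree ≤ d → Q.eval 1 = 1 →
      pNormPow p P ≤ pNormPow p Q) :
    (∀ z : ℂ, P.eval z = 0 → ‖z‖ = 1) ∧
    (∀ θ : ℝ, P.eval (Complex.exp (θ * Complex.I)) =
      starRingEnd ℂ (P.eval (Complex.exp (-θ * Complex.I)))) := by
  have hP0 : P ≠ 0 := fun h0 => by simp [h0] at hval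
  constructor
  · -- zeros on the unit circle
    intro z0 hz
    by_contra habs
    have hz01 : z0 ≠ 1 := fun h => habs (by rw [h]; exact norm_one)
    set m := Polynomial.rootMultiplicity z0 P with hm
    set R := P /ₘ (X - Polynomial.C z0) ^ m with hRdef
    have hfact : (X - Polynomial.C z0) ^ m * R = P :=
      Polynomial.pow_mul_divByMonic_rootMultiplicity_eq P z0
    have hR0 : R.eval z0 ≠ 0 :=
      Polynomial.eval_divByMonic_pow_rootMultiplicity_ne_zero z0 hP0
    have hRne : R ≠ 0 := fun h => hR0 (by simp [h])
    set w := starRingEnd ℂ z0 with hw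
    have hw1 : w ≠ 1 := fun h => hz01 (by
      have : starRingEnd ℂ w = starRingEnd ℂ 1 := by rw [h]
      simpa [hw] using this)
    have h1z0 : (1:ℂ) - z0 ≠ 0 := sub_ne_zero.mpr (Ne.symm hz01)
    have h1w : (1:ℂ) - w ≠ 0 := sub_ne_zero.mpr (Ne.symm hw1)
    set c : ℂ := ((1 - z0) / (1 - w)) ^ m with hc
    set Q : Polynomial ℂ := Polynomial.C c * ((1 - Polynomial.C w * X) ^ m * R) with hQ
    have hdegP : m + R.natDegree = P.natDegree := by
      have h := Polynomial.natDegree_mul (pow_ne_zero m (Polynomial.X_sub_C_ne_zero z0)) hRne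
      rw [hfact] at h
      rw [h, Polynomial.natDegree_pow, Polynomial.natDegree_X_sub_C, mul_one]
    have hQdeg : Q.natDegree ≤ d := by
      refine le_trans (natDegree_C_mul_le _ _) (le_trans (natDegree_mul_le) ?_)
      have hb : (1 - Polynomial.C w * X : Polynomial ℂ).natDegree ≤ 1 := by
        refine le_trans (natDegree_sub_le _ _) (max_le ?_ ?_)
        · simp
        · exact le_trans (natDegree_C_mul_le _ _) (by simp)
      have hpow : ((1 - Polynomial.C w * X : Polynomial ℂ) ^ m).natDegree ≤ m := by
        refine le_trans natDegree_pow_le ?_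
        calc m * (1 - Polynomial.C w * X : Polynomial ℂ).natDegree ≤ m * 1 :=
              Nat.mul_le_mul_left m hb
          _ = m := mul_one m
      calc ((1 - Polynomial.C w * X : Polynomial ℂ) ^ m).natDegree + R.natDegree
          ≤ m + R.natDegree := Nat.add_le_add_right hpow _
        _ = P.natDegree := hdegP
        _ ≤ d := hdeg
    have hPeval1 : (1 - z0) ^ m * R.eval 1 = 1 := by
      have h := congrArg (Polynomial.eval 1) hfact
      simpa [hval] using h
    have hcmul : c * (1 - w) ^ m = (1 - z0) ^ m := by
      rw [hc, ← mul_pow, div_mul_cancel₀ _ h1w]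
    have hQval : Q.eval 1 = 1 := by
      have : Q.eval 1 = c * ((1 - w) ^ m * R.eval 1) := by
        simp [hQ]
      rw [this, ← mul_assoc, hcmul]
      exact hPeval1
    have habs_eq : ∀ θ : ℝ, norm (Q.eval (Complex.exp (θ * Complex.I))) =
        norm (P.eval (Complex.exp (θ * Complex.I))) := by
      intro θ
      set z := Complex.exp (θ * Complex.I) with hzdef
      have hz1 : norm z = 1 := by
        simp [hzdef, Complex.norm_exp]
      have hzz : z * starRingEnd ℂ z = 1 := by
        rw [Complex.mul_conj, Complex.normSq_eq_norm_sq, hz1]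
        norm_num
      have hb : norm (1 - w * z) = norm (z - z0) := by
        rw [← Complex.norm_conj]
        have hcj : starRingEnd ℂ (1 - w * z) = starRingEnd ℂ z * (z - z0) := by
          simp only [map_sub, map_one, map_mul, hw, Complex.conj_conj]
          linear_combination -hzz
        rw [hcj, norm_mul, Complex.norm_conj, hz1, one_mul]
      have hcabs : norm c = 1 := by
        rw [hc, norm_pow, norm_div]
        have hwc : norm (1 - w) = norm (1 - z0) := by
          rw [← Complex.norm_conj (1 - z0)]
          congr 1
          simp [hw]
        rw [hwc, div_self ((norm_ne_zero_iff.mpr h1z0)), one_pow]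
      have h1 : norm (Q.eval z) =
          norm c * ((norm (1 - w * z)) ^ m * norm (R.eval z)) := by
        simp [hQ, norm_mul, norm_pow]
      have h2 : norm (P.eval z) =
          (norm (z - z0)) ^ m * norm (R.eval z) := by
        rw [← hfact]
        simp [norm_mul, norm_pow]
      rw [h1, h2, hb, hcabs, one_mul]
    have hQnorm : pNormPow p Q = pNormPow p P := by
      simp only [pNormPow]
      congr 1
      exact intervalIntegral.integral_congr (fun θ _ => by rw [habs_eq θ])
    have hQP : Q = P := uniq hp1 d P hdeg hval hmin Q hQdeg hQval hQnorm
    have hQz0 : Q.eval z0 ≠ 0 := by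
      have hev : Q.eval z0 = c * ((1 - w * z0) ^ m * R.eval z0) := by
        simp [hQ]
      rw [hev]
      have hc0 : c ≠ 0 := pow_ne_zero _ (div_ne_zero h1z0 h1w)
      have hwz : (1:ℂ) - w * z0 ≠ 0 := by
        have hnw : w * z0 = (Complex.normSq z0 : ℂ) := by
          rw [hw, mul_comm, Complex.mul_conj]
        intro h
        have h1 : (Complex.normSq z0 : ℂ) = 1 := by
          rw [← hnw]; linear_combination -h
        have h2 : Complex.normSq z0 = 1 := by exact_mod_cast h1
        rw [Complex.normSq_eq_norm_sq] at h2
        exact habs (by nlinarith [norm_nonneg z0])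
      exact mul_ne_zero hc0 (mul_ne_zero (pow_ne_zero _ hwz) hR0)
    exact hQz0 (by rw [hQP]; exact hz)
  · -- conjugate symmetry
    set Pc := P.map (starRingEnd ℂ) with hPc
    have hPcdeg : Pc.natDegree ≤ d := by
      rw [hPc, Polynomial.natDegree_map_eq_of_injective (RingHom.injective (starRingEnd ℂ))]
      exact hdeg
    have hPcval : Pc.eval 1 = 1 := by
      have h := eval_map_conj P 1
      rw [map_one] at h
      rw [hPc, h, hval, map_one]
    have hkey : ∀ θ : ℝ, Pc.eval (Complex.exp (θ * Complex.I)) =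
        starRingEnd ℂ (P.eval (Complex.exp (-θ * Complex.I))) := by
      intro θ
      have hconj : starRingEnd ℂ (Complex.exp (-θ * Complex.I)) =
          Complex.exp ((θ : ℝ) * Complex.I) := by
        rw [← Complex.exp_conj]
        congr 1
        simp [Complex.conj_I]
      calc Pc.eval (Complex.exp (θ * Complex.I))
          = Pc.eval (starRingEnd ℂ (Complex.exp (-θ * Complex.I))) := by rw [hconj]
        _ = starRingEnd ℂ (P.eval (Complex.exp (-θ * Complex.I))) := eval_map_conj P _
    have hnormc : pNormPow p Pc = pNormPow p P := by
      simp only [pNormPow]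
      congr 1
      set g : ℝ → ℝ := fun t : ℝ =>
        (norm (P.eval (Complex.exp (t * Complex.I)))) ^ p with hgdef
      have h1 : ∀ θ : ℝ, (norm (Pc.eval (Complex.exp (θ * Complex.I)))) ^ p =
          g (-θ) := by
        intro θ
        rw [hkey θ]
        simp only [hgdef, Complex.norm_conj, Complex.ofReal_neg, neg_mul]
      rw [intervalIntegral.integral_congr (g := fun θ => g (-θ)) (fun θ _ => h1 θ),
        intervalIntegral.integral_comp_neg, neg_neg]
    have hPcP : Pc = P := uniq hp1 d P hdeg hval hmin Pc hPcdeg hPcval hnormc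
    intro θ
    rw [← hkey θ, hPcP]
end

section
/- Let 2 ≤ p ≤ 4 and let P be the unique minimizer of ‖Q‖_p^p among polynomials Q of degree at most 4 with Q(1) = 1, whose zeroes are e^{±it_1}, e^{±it_2} with 0 < t_1 ≤ t_2 ≤ π. Then t_2 ≥ π/2. -/
open Complex Polynomial

lemma key8 (θ t : ℝ) :
    (Complex.exp ((θ:ℂ)*I) - Complex.exp ((t:ℂ)*I)) * (Complex.exp ((θ:ℂ)*I) - Complex.exp (-(t:ℂ)*I))
      = ((2*(Real.cos θ - Real.cos t) : ℝ) : ℂ) * Complex.exp ((θ:ℂ)*I) := by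
  have h1 : Complex.exp ((θ:ℂ)*I) = Complex.cos θ + Complex.sin θ * I := Complex.exp_mul_I _
  have h2 : Complex.exp ((t:ℂ)*I) = Complex.cos t + Complex.sin t * I := Complex.exp_mul_I _
  have h3 : Complex.exp (-(t:ℂ)*I) = Complex.cos t - Complex.sin t * I := by
    rw [Complex.exp_mul_I, Complex.cos_neg, Complex.sin_neg]; ring
  have pθ : Complex.sin θ^2 + Complex.cos θ^2 = 1 := Complex.sin_sq_add_cos_sq _
  have pt : Complex.sin t^2 + Complex.cos t^2 = 1 := Complex.sin_sq_add_cos_sq _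
  have hI : (I:ℂ)^2 = -1 := Complex.I_sq
  rw [h1, h2, h3]
  push_cast
  linear_combination (2+Complex.I^2)*pt - (2+Complex.I^2)*pθ + ((Complex.cos θ)^2 + 2*(Complex.sin θ)^2 - (Complex.cos t)^2 - 2*(Complex.sin t)^2)*hI

noncomputable def Rpoly (a : ℂ) (s₁ s₂ : ℝ) : Polynomial ℂ :=
  Polynomial.C a *
      ((X - Polynomial.C (Complex.exp ((s₁ : ℂ) * Complex.I))) *
       (X - Polynomial.C (Complex.exp (-(s₁ : ℂ) * Complex.I))) *
       (X - Polynomial.C (Complex.exp ((s₂ : ℂ) * Complex.I))) *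
       (X - Polynomial.C (Complex.exp (-(s₂ : ℂ) * Complex.I))))

lemma Rpoly_natDegree_le (a : ℂ) (s₁ s₂ : ℝ) : (Rpoly a s₁ s₂).natDegree ≤ 4 := by
  unfold Rpoly
  compute_degree

lemma Rpoly_eval_circle (a : ℂ) (s₁ s₂ θ : ℝ) :
    (Rpoly a s₁ s₂).eval (Complex.exp ((θ:ℂ) * I)) =
      a * (((2*(Real.cos θ - Real.cos s₁) : ℝ) : ℂ) * Complex.exp ((θ:ℂ)*I))
        * (((2*(Real.cos θ - Real.cos s₂) : ℝ) : ℂ) * Complex.exp ((θ:ℂ)*I)) := by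
  have e1 := key8 θ s₁
  have e2 := key8 θ s₂
  unfold Rpoly
  simp only [Polynomial.eval_mul, Polynomial.eval_sub, Polynomial.eval_X, Polynomial.eval_C]
  rw [← e1, ← e2]; ring

lemma Rpoly_eval_one (a : ℂ) (s₁ s₂ : ℝ) :
    (Rpoly a s₁ s₂).eval 1 =
      a * ((2*(1 - Real.cos s₁) : ℝ) : ℂ) * ((2*(1 - Real.cos s₂) : ℝ) : ℂ) := by
  have := Rpoly_eval_circle a s₁ s₂ 0
  simp only [Complex.ofReal_zero, zero_mul, Complex.exp_zero, Real.cos_zero] at this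
  rw [this]; ring

lemma Rpoly_abs_eval (a : ℂ) (s₁ s₂ θ : ℝ) :
    ‖(Rpoly a s₁ s₂).eval (Complex.exp ((θ:ℂ) * I))‖ =
      ‖a‖ * (2*|Real.cos θ - Real.cos s₁|) * (2*|Real.cos θ - Real.cos s₂|) := by
  rw [Rpoly_eval_circle]
  have habs : ‖Complex.exp ((θ:ℂ)*I)‖ = 1 := by
    rw [Complex.norm_exp]; simp
  simp only [norm_mul, habs, Complex.norm_real, Real.norm_eq_abs, mul_one]
  norm_num

lemma Rpoly_pNormPow (p : ℝ) (hp : 0 < p) (a : ℂ) (s₁ s₂ : ℝ) :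
    pNormPow p (Rpoly a s₁ s₂) =
      (1 / (2 * Real.pi)) * ((4 * ‖a‖) ^ p *
        ∫ θ in (-Real.pi)..Real.pi,
          |Real.cos θ - Real.cos s₁| ^ p * |Real.cos θ - Real.cos s₂| ^ p) := by
  unfold pNormPow
  congr 1
  rw [← intervalIntegral.integral_const_mul]
  apply intervalIntegral.integral_congr
  intro θ _
  beta_reduce
  rw [Rpoly_abs_eval]
  rw [show ‖a‖ * (2*|Real.cos θ - Real.cos s₁|) * (2*|Real.cos θ - Real.cos s₂|)
      = (4 * ‖a‖) * (|Real.cos θ - Real.cos s₁| * |Real.cos θ - Real.cos s₂|) by ring]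
  rw [Real.mul_rpow (by positivity) (by positivity),
      Real.mul_rpow (by positivity) (by positivity),
      Real.mul_rpow (abs_nonneg _) (abs_nonneg _)]

set_option maxHeartbeats 1000000 in
open Polynomial in
theorem stmt8 (p : ℝ) (hp2 : 2 ≤ p) (hp4 : p ≤ 4)
    (P : Polynomial ℂ) (hdeg : P.natDegree ≤ 4) (hval : P.eval 1 = 1)
    (hmin : ∀ Q : Polynomial ℂ, Q.natDegree ≤ 4 → Q.eval 1 = 1 →
      pNormPow p P ≤ pNormPow p Q)
    (t₁ t₂ : ℝ) (ht1 : 0 < t₁) (ht12 : t₁ ≤ t₂) (ht2 : t₂ ≤ Real.pi)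
    (c : ℂ)
    (hP : P = Polynomial.C c *
      ((X - Polynomial.C (Complex.exp ((t₁ : ℂ) * Complex.I))) *
       (X - Polynomial.C (Complex.exp (-(t₁ : ℂ) * Complex.I))) *
       (X - Polynomial.C (Complex.exp ((t₂ : ℂ) * Complex.I))) *
       (X - Polynomial.C (Complex.exp (-(t₂ : ℂ) * Complex.I))))) :
    Real.pi / 2 ≤ t₂ := by
  by_contra hcon
  push_neg at hcon
  have hpi := Real.pi_pos
  have hp0 : 0 < p := by linarith
  set c₁ := Real.cos t₁ with hc₁
  set c₂ := Real.cos t₂ with hc₂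
  have hc₂pos : 0 < c₂ := Real.cos_pos_of_mem_Ioo ⟨by linarith, hcon⟩
  have hc₁₂ : c₂ ≤ c₁ := Real.cos_le_cos_of_nonneg_of_le_pi ht1.le ht2 ht12
  have hc₁lt1 : c₁ < 1 := by
    have := Real.cos_lt_cos_of_nonneg_of_le_pi le_rfl (by linarith : t₁ ≤ Real.pi) ht1
    simpa using this
  have hc₁pos : 0 < c₁ := lt_of_lt_of_le hc₂pos hc₁₂
  have hPR : P = Rpoly c t₁ t₂ := hP
  -- value of |c|
  have hevalP : c * ((2*(1 - c₁) : ℝ) : ℂ) * ((2*(1 - c₂) : ℝ) : ℂ) = 1 := by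
    rw [← Rpoly_eval_one c t₁ t₂, ← hPR, hval]
  have habsP : ‖c‖ * (2*(1 - c₁)) * (2*(1 - c₂)) = 1 := by
    have h := congrArg (‖·‖) hevalP
    rw [norm_mul, norm_mul, Complex.norm_real, Complex.norm_real, Real.norm_eq_abs, Real.norm_eq_abs, norm_one,
      abs_of_pos (by nlinarith : (0:ℝ) < 2*(1-c₁)),
      abs_of_pos (by nlinarith : (0:ℝ) < 2*(1-c₂))] at h
    exact h
  -- the competitor polynomial
  set c' : ℂ := ((2*(1 + c₁) : ℝ) : ℂ)⁻¹ * ((2*(1 + c₂) : ℝ) : ℂ)⁻¹ with hc'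
  set Q := Rpoly c' (Real.pi - t₁) (Real.pi - t₂) with hQ
  have h1c₁ : ((2*(1 + c₁) : ℝ) : ℂ) ≠ 0 := by
    simp only [ne_eq, Complex.ofReal_eq_zero]; nlinarith
  have h1c₂ : ((2*(1 + c₂) : ℝ) : ℂ) ≠ 0 := by
    simp only [ne_eq, Complex.ofReal_eq_zero]; nlinarith
  have hQval : Q.eval 1 = 1 := by
    rw [hQ, Rpoly_eval_one, Real.cos_pi_sub, Real.cos_pi_sub, hc']
    rw [show (1 : ℝ) - -c₁ = 1 + c₁ by ring, show (1 : ℝ) - -c₂ = 1 + c₂ by ring]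
    calc ((2*(1 + c₁) : ℝ) : ℂ)⁻¹ * ((2*(1 + c₂) : ℝ) : ℂ)⁻¹ * ((2*(1 + c₁) : ℝ) : ℂ) * ((2*(1 + c₂) : ℝ) : ℂ)
        = (((2*(1 + c₁) : ℝ) : ℂ)⁻¹ * ((2*(1 + c₁) : ℝ) : ℂ)) * (((2*(1 + c₂) : ℝ) : ℂ)⁻¹ * ((2*(1 + c₂) : ℝ) : ℂ)) := by ring
      _ = 1 := by rw [inv_mul_cancel₀ h1c₁, inv_mul_cancel₀ h1c₂, mul_one]
  have habsc' : ‖c'‖ = (2*(1 + c₁))⁻¹ * (2*(1 + c₂))⁻¹ := by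
    rw [hc', norm_mul, norm_inv, norm_inv, Complex.norm_real, Complex.norm_real, Real.norm_eq_abs, Real.norm_eq_abs,
      abs_of_pos (by nlinarith : (0:ℝ) < 2*(1+c₁)),
      abs_of_pos (by nlinarith : (0:ℝ) < 2*(1+c₂))]
  -- the common integral
  set g : ℝ → ℝ := fun θ => |Real.cos θ - c₁| ^ p * |Real.cos θ - c₂| ^ p with hg
  have hgcont : Continuous g := by
    apply Continuous.mul
    · exact ((Real.continuous_cos.sub continuous_const).abs).rpow_const (fun x => Or.inr hp0.le)
    · exact ((Real.continuous_cos.sub continuous_const).abs).rpow_const (fun x => Or.inr hp0.le)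
  have hgint : ∀ a b : ℝ, IntervalIntegrable g MeasureTheory.volume a b :=
    fun a b => hgcont.intervalIntegrable a b
  have hgnonneg : ∀ x : ℝ, 0 ≤ g x := fun x => by positivity
  have hgper : Function.Periodic g (2 * Real.pi) := by
    intro x; simp only [hg, Real.cos_add_two_pi]
  -- integral of reflected equals integral of g
  have hrefl : (∫ θ in (-Real.pi)..Real.pi,
      |Real.cos θ - Real.cos (Real.pi - t₁)| ^ p * |Real.cos θ - Real.cos (Real.pi - t₂)| ^ p)
      = ∫ θ in (-Real.pi)..Real.pi, g θ := by
    have step1 : (∫ θ in (-Real.pi)..Real.pi,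
        |Real.cos θ - Real.cos (Real.pi - t₁)| ^ p * |Real.cos θ - Real.cos (Real.pi - t₂)| ^ p)
        = ∫ θ in (-Real.pi)..Real.pi, g (θ + Real.pi) := by
      apply intervalIntegral.integral_congr
      intro θ _
      simp only [hg, Real.cos_add_pi, Real.cos_pi_sub]
      rw [show -Real.cos θ - c₁ = -(Real.cos θ + c₁) by ring,
          show -Real.cos θ - c₂ = -(Real.cos θ + c₂) by ring,
          show Real.cos θ - -c₁ = Real.cos θ + c₁ by ring,
          show Real.cos θ - -c₂ = Real.cos θ + c₂ by ring, abs_neg, abs_neg]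
    rw [step1, intervalIntegral.integral_comp_add_right g Real.pi]
    have h5 := hgper.intervalIntegral_add_eq 0 (-Real.pi)
    rw [zero_add, show -Real.pi + 2*Real.pi = Real.pi by ring] at h5
    rw [show -Real.pi + Real.pi = 0 by ring, show Real.pi + Real.pi = 2*Real.pi by ring, h5]
  -- the integral is positive
  set K := ∫ θ in (-Real.pi)..Real.pi, g θ with hK
  have hKpos : 0 < K := by
    have hsplit := intervalIntegral.integral_add_adjacent_intervals
      (hgint (-Real.pi) (2*Real.pi/3)) (hgint (2*Real.pi/3) Real.pi)
    have h23 : Real.cos (2*Real.pi/3) = -(1/2) := by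
      rw [show 2*Real.pi/3 = Real.pi - Real.pi/3 by ring, Real.cos_pi_sub, Real.cos_pi_div_three]
    have hpos2 : 0 < ∫ θ in (2*Real.pi/3)..Real.pi, g θ := by
      apply intervalIntegral.intervalIntegral_pos_of_pos_on (hgint _ _)
      · intro x hx
        have hcx : Real.cos x < -(1/2) := by
          rw [← h23]
          exact Real.cos_lt_cos_of_nonneg_of_le_pi (by positivity) hx.2.le hx.1
        have f1 : 0 < |Real.cos x - c₁| := abs_pos.mpr (by nlinarith)
        have f2 : 0 < |Real.cos x - c₂| := abs_pos.mpr (by nlinarith)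
        exact mul_pos (Real.rpow_pos_of_pos f1 p) (Real.rpow_pos_of_pos f2 p)
      · linarith
    have hpos1 : 0 ≤ ∫ θ in (-Real.pi)..(2*Real.pi/3), g θ :=
      intervalIntegral.integral_nonneg (by linarith) (fun x _ => hgnonneg x)
    rw [hK, ← hsplit]
    linarith
  -- apply minimality
  have hQdeg : Q.natDegree ≤ 4 := Rpoly_natDegree_le _ _ _
  have hmineq := hmin Q hQdeg hQval
  rw [hPR, hQ, Rpoly_pNormPow p hp0, Rpoly_pNormPow p hp0, hrefl, ← hK] at hmineq
  -- derive contradiction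
  have h2pi : 0 < 1 / (2 * Real.pi) := by positivity
  have hmul : (4 * ‖c‖) ^ p * K ≤ (4 * ‖c'‖) ^ p * K :=
    le_of_mul_le_mul_left hmineq h2pi
  have hrp : (4 * ‖c‖) ^ p ≤ (4 * ‖c'‖) ^ p :=
    le_of_mul_le_mul_right hmul hKpos
  have hle : ‖c‖ ≤ ‖c'‖ := by
    by_contra h''
    push_neg at h''
    have : (4 * ‖c'‖) ^ p < (4 * ‖c‖) ^ p :=
      Real.rpow_lt_rpow (by positivity) (by linarith) hp0
    linarith
  -- numeric contradiction
  have hA : 0 < 2*(1-c₁) := by linarith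
  have hB : 0 < 2*(1-c₂) := by linarith
  have hC : 0 < 2*(1+c₁) := by linarith
  have hD : 0 < 2*(1+c₂) := by linarith
  have e1 : ‖c‖ = ((2*(1-c₁)) * (2*(1-c₂)))⁻¹ := by
    rw [mul_assoc] at habsP
    exact eq_inv_of_mul_eq_one_left habsP
  have e2 : ‖c'‖ = ((2*(1+c₁)) * (2*(1+c₂)))⁻¹ := by
    rw [habsc']; exact (mul_inv _ _).symm
  rw [e1, e2, inv_le_inv₀ (by positivity) (by positivity)] at hle
  nlinarith [hle, hc₁pos, hc₂pos]
end
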